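/- Fix a real number ε > 0 and define f̃ : ℂ² → ℂ³ by f̃(s,t) = (s² + 2ε·conj(s), st + ε·conj(s), t). Then f̃ is differentiable as a map of real vector spaces at every point, and the set of points p ∈ ℂ² at which the real derivative of f̃ (an ℝ-linear map ℂ² → ℂ³) is not injective equals {(s,t) ∈ ℂ² : s = t and |s| = ε}. -/

import Mathlib

open Complex

noncomputable def conjC : ℂ →L[ℝ] ℂ := Complex.conjCLE.toContinuousLinearMap

theorem stmt_9 (ε : ℝ) (hε : 0 < ε) (f : ℂ × ℂ → ℂ × ℂ × ℂ)
    (hf : ∀ s t : ℂ, f (s, t) =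
      (s ^ 2 + 2 * (ε : ℂ) * (starRingEnd ℂ) s,
       s * t + (ε : ℂ) * (starRingEnd ℂ) s, t)) :
    (∀ p : ℂ × ℂ, DifferentiableAt ℝ f p) ∧
    {p : ℂ × ℂ | ¬ Function.Injective (fderiv ℝ f p)} =
      {p : ℂ × ℂ | p.1 = p.2 ∧ ‖p.1‖ = ε} := by
  have hfe : f = fun p : ℂ × ℂ =>
      (p.1 * p.1 + 2 * (ε : ℂ) * (starRingEnd ℂ) p.1,
       p.1 * p.2 + (ε : ℂ) * (starRingEnd ℂ) p.1, p.2) := by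
    funext p
    show f (p.1, p.2) = _
    rw [hf]
    simp [pow_two]
  subst hfe
  have hD : ∀ p : ℂ × ℂ, HasFDerivAt
      (fun p : ℂ × ℂ =>
        (p.1 * p.1 + 2 * (ε : ℂ) * (starRingEnd ℂ) p.1,
         p.1 * p.2 + (ε : ℂ) * (starRingEnd ℂ) p.1, p.2))
      (((p.1 • ContinuousLinearMap.fst ℝ ℂ ℂ + p.1 • ContinuousLinearMap.fst ℝ ℂ ℂ) +
          (2 * (ε : ℂ)) • (conjC.comp (ContinuousLinearMap.fst ℝ ℂ ℂ))).prod
        (((p.1 • ContinuousLinearMap.snd ℝ ℂ ℂ + p.2 • ContinuousLinearMap.fst ℝ ℂ ℂ) +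
          ((ε : ℂ)) • (conjC.comp (ContinuousLinearMap.fst ℝ ℂ ℂ))).prod
          (ContinuousLinearMap.snd ℝ ℂ ℂ))) p := by
    intro p
    have h1 : HasFDerivAt (fun p : ℂ × ℂ => p.1) (ContinuousLinearMap.fst ℝ ℂ ℂ) p :=
      hasFDerivAt_fst
    have h2 : HasFDerivAt (fun p : ℂ × ℂ => p.2) (ContinuousLinearMap.snd ℝ ℂ ℂ) p :=
      hasFDerivAt_snd
    have hconj : HasFDerivAt (fun p : ℂ × ℂ => (starRingEnd ℂ) p.1)
        (conjC.comp (ContinuousLinearMap.fst ℝ ℂ ℂ)) p :=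
      conjC.hasFDerivAt.comp p h1
    exact ((h1.mul h1).add (hconj.const_mul (2 * (ε : ℂ)))).prodMk
      (((h1.mul h2).add (hconj.const_mul ((ε : ℂ)))).prodMk h2)
  have key : ∀ s t u v : ℂ,
      fderiv ℝ (fun p : ℂ × ℂ =>
        (p.1 * p.1 + 2 * (ε : ℂ) * (starRingEnd ℂ) p.1,
         p.1 * p.2 + (ε : ℂ) * (starRingEnd ℂ) p.1, p.2)) (s, t) (u, v) =
      (2 * s * u + 2 * (ε : ℂ) * (starRingEnd ℂ) u,
       s * v + t * u + (ε : ℂ) * (starRingEnd ℂ) u, v) := by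
    intro s t u v
    rw [(hD (s, t)).fderiv]
    simp [conjC, smul_eq_mul, Prod.ext_iff]
    ring
  constructor
  · exact fun p => (hD p).differentiableAt
  · ext ⟨s, t⟩
    simp only [Set.mem_setOf_eq]
    constructor
    · intro hni
      rw [injective_iff_map_eq_zero] at hni
      push_neg at hni
      obtain ⟨⟨u, v⟩, h0, hne⟩ := hni
      rw [key] at h0
      have hv : v = 0 := congrArg (fun x => x.2.2) h0
      have h1 : 2 * s * u + 2 * (ε : ℂ) * (starRingEnd ℂ) u = 0 :=
        congrArg (fun x => x.1) h0
      have h2 : s * v + t * u + (ε : ℂ) * (starRingEnd ℂ) u = 0 :=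
        congrArg (fun x => x.2.1) h0
      subst hv
      have hu : u ≠ 0 := by
        intro h; apply hne; rw [h]; rfl
      have h1' : s * u + (ε : ℂ) * (starRingEnd ℂ) u = 0 := by
        have h2 : 2 * (s * u + (ε : ℂ) * (starRingEnd ℂ) u) = 0 := by linear_combination h1
        simpa using h2
      have h2' : t * u + (ε : ℂ) * (starRingEnd ℂ) u = 0 := by
        linear_combination h2
      have hst : s = t := by
        have hz : (s - t) * u = 0 := by linear_combination h1' - h2'
        rcases mul_eq_zero.1 hz with h | h
        · exact sub_eq_zero.1 h
        · exact absurd h hu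
      refine ⟨hst, ?_⟩
      have habs : ‖s * u‖ = ‖(ε : ℂ) * (starRingEnd ℂ) u‖ := by
        have hsu : s * u = -((ε : ℂ) * (starRingEnd ℂ) u) := by linear_combination h1'
        rw [hsu]; simp
      simp only [norm_mul, Complex.norm_conj, Complex.norm_real, Real.norm_eq_abs, abs_of_pos hε] at habs
      have hU : ‖u‖ ≠ 0 := by simpa using hu
      exact mul_right_cancel₀ hU habs
    · rintro ⟨hst, habs⟩
      have hs0 : s ≠ 0 := by
        intro h; rw [h] at habs; simp at habs; linarith
      obtain ⟨u, hu⟩ := IsAlgClosed.exists_pow_nat_eq (k := ℂ)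
        (-(ε : ℂ) * (starRingEnd ℂ) s) (n := 2) (by norm_num)
      have hrhs : (-(ε : ℂ)) * (starRingEnd ℂ) s ≠ 0 := by
        refine mul_ne_zero ?_ (by simpa using hs0)
        simpa using ne_of_gt hε
      have hu0 : u ≠ 0 := by
        intro h
        apply hrhs
        rw [← hu, h]; ring
      have habsu : ‖u‖ ^ 2 = ε ^ 2 := by
        rw [← norm_pow, hu]
        simp [norm_mul, Complex.norm_conj, habs, abs_of_pos hε, sq]
      have hnsq : u * (starRingEnd ℂ) u = ((ε : ℂ)) ^ 2 := by
        rw [Complex.mul_conj]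
        norm_cast
        rw [← Complex.sq_norm, habsu]
      have hsconj : s * (starRingEnd ℂ) s = ((ε : ℂ)) ^ 2 := by
        rw [Complex.mul_conj]
        norm_cast
        rw [← Complex.sq_norm, habs]
      have hkey : s * u + (ε : ℂ) * (starRingEnd ℂ) u = 0 := by
        have h0 : (s * u + (ε : ℂ) * (starRingEnd ℂ) u) * u = 0 := by
          linear_combination s * hu + (ε : ℂ) * hnsq - (ε : ℂ) * hsconj
        rcases mul_eq_zero.1 h0 with h | h
        · exact h
        · exact absurd h hu0
      intro hinj
      have heq := hinj (a₁ := (u, 0)) (a₂ := (0, 0)) (by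
        rw [key, key]
        simp only [map_zero, mul_zero, zero_add, add_zero, Prod.mk.injEq]
        refine ⟨by linear_combination 2 * hkey, ?_, trivial⟩
        rw [← hst]
        linear_combination hkey)
      exact hu0 (congrArg Prod.fst heq)
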